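/- Let f be monic of degree n with all zeros simple and contained in [-1,1], minimizing I[f] = ∫_E |f| over monic polynomials of degree n, where E = [-1,α] ∪ [β,1]. Then f has at most one zero in the open interval (α, β). -/

import Mathlib

open MeasureTheory Polynomial

/-- A monic minimizer of `I[f] = ∫_E |f|` whose zeros are all simple and lie in
`[-1,1]` has at most one zero in the open gap `(α,β)`. -/
theorem akhiezer_at_most_one_gap_zero
    (α β : ℝ) (hα : -1 < α) (hαβ : α < β) (hβ : β < 1) (n : ℕ) (hn : 1 ≤ n)
    (f : Polynomial ℝ) (hf : f.Monic) (hdeg : f.natDegree = n)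
    (hzeros : ∀ z : ℝ, f.eval z = 0 → z ∈ Set.Icc (-1:ℝ) 1)
    (hsimple : Squarefree f)
    (hmin : ∀ g : Polynomial ℝ, g.Monic → g.natDegree = n →
      (∫ x in (-1:ℝ)..α, |f.eval x|) + (∫ x in β..(1:ℝ), |f.eval x|) ≤
      (∫ x in (-1:ℝ)..α, |g.eval x|) + (∫ x in β..(1:ℝ), |g.eval x|)) :
    ∀ ξ η : ℝ, f.eval ξ = 0 → f.eval η = 0 →
      ξ ∈ Set.Ioo α β → η ∈ Set.Ioo α β → ξ = η := by
  intro ξ η hfξ hfη hξ hη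
  by_contra hne
  obtain ⟨hαξ, hξβ⟩ := hξ
  obtain ⟨hαη, hηβ⟩ := hη
  have hd1 : (X - C ξ) ∣ f := dvd_iff_isRoot.mpr hfξ
  have hd2 : (X - C η) ∣ f := dvd_iff_isRoot.mpr hfη
  have hcop : IsCoprime (X - C ξ) (X - C η) :=
    pairwise_coprime_X_sub_C (Function.injective_id) hne
  obtain ⟨φ, hφ⟩ : (X - C ξ) * (X - C η) ∣ f := hcop.mul_dvd hd1 hd2
  set q : Polynomial ℝ := (X - C ξ) * (X - C η) with hq_def
  have hqmon : q.Monic := (monic_X_sub_C ξ).mul (monic_X_sub_C η)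
  have hqdeg : q.natDegree = 2 := by
    rw [hq_def, natDegree_mul (X_sub_C_ne_zero ξ) (X_sub_C_ne_zero η),
      natDegree_X_sub_C, natDegree_X_sub_C]
  have hφmon : φ.Monic := hqmon.of_mul_monic_left (hφ ▸ hf)
  have hφdeg : 2 + φ.natDegree = n := by
    rw [← hdeg, hφ, hqmon.natDegree_mul hφmon, hqdeg]
  -- the positive constant h
  set h : ℝ := min ((ξ - α) * (η - α)) ((β - ξ) * (β - η)) with hh_def
  have hh1 : 0 < (ξ - α) * (η - α) := mul_pos (by linarith) (by linarith)
  have hh2 : 0 < (β - ξ) * (β - η) := mul_pos (by linarith) (by linarith)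
  have hhpos : 0 < h := lt_min hh1 hh2
  -- the competitor polynomial
  set g : Polynomial ℝ := f - C h * φ with hg_def
  have hgfac : g = (q - C h) * φ := by rw [hg_def, hφ]; ring
  have hqhmon : (q - C h).Monic := by
    have : q.degree = 2 := by
      rw [degree_eq_natDegree hqmon.ne_zero, hqdeg]; rfl
    have hdlt : (-(C h)).degree < q.degree := by
      rw [this]
      exact lt_of_le_of_lt (degree_neg (C h) ▸ degree_C_le) (by norm_num)
    simpa [sub_eq_add_neg] using hqmon.add_of_left hdlt
  have hgmon : g.Monic := hgfac ▸ hqhmon.mul hφmon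
  have hgdeg : g.natDegree = n := by
    rw [hgfac, hqhmon.natDegree_mul hφmon, natDegree_sub_C, hqdeg, hφdeg]
  -- pointwise identity on E
  have key : ∀ x : ℝ, x ≤ α ∨ β ≤ x →
      |g.eval x| = |f.eval x| - h * |φ.eval x| := by
    intro x hx
    have hqx : q.eval x = (x - ξ) * (x - η) := by simp [hq_def]
    have hqge : h ≤ q.eval x := by
      rw [hqx]
      rcases hx with hx | hx
      · exact le_trans (min_le_left _ _) (by nlinarith)
      · exact le_trans (min_le_right _ _) (by nlinarith)
    have hqnn : 0 ≤ q.eval x := le_trans hhpos.le hqge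
    have hfx : f.eval x = q.eval x * φ.eval x := by rw [hφ]; simp [hq_def]
    have hgx : g.eval x = (q.eval x - h) * φ.eval x := by rw [hgfac]; simp
    rw [hfx, hgx, abs_mul, abs_mul, abs_of_nonneg hqnn,
      abs_of_nonneg (by linarith : (0:ℝ) ≤ q.eval x - h)]
    ring
  -- integrability
  have hcφ : Continuous fun x : ℝ => |φ.eval x| := φ.continuous.abs
  have hcf : Continuous fun x : ℝ => |f.eval x| := f.continuous.abs
  have hcg : Continuous fun x : ℝ => |g.eval x| := g.continuous.abs
  have hint1 : (∫ x in (-1:ℝ)..α, |g.eval x|)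
      = (∫ x in (-1:ℝ)..α, |f.eval x|) - h * ∫ x in (-1:ℝ)..α, |φ.eval x| := by
    rw [← intervalIntegral.integral_const_mul, ← intervalIntegral.integral_sub
      (hcf.intervalIntegrable _ _) (Continuous.intervalIntegrable (u := fun x : ℝ => h * |φ.eval x|) (continuous_const.mul hcφ) _ _)]
    apply intervalIntegral.integral_congr
    intro x hx
    rw [Set.uIcc_of_le (by linarith : (-1:ℝ) ≤ α)] at hx
    exact key x (Or.inl hx.2)
  have hint2 : (∫ x in β..(1:ℝ), |g.eval x|)
      = (∫ x in β..(1:ℝ), |f.eval x|) - h * ∫ x in β..(1:ℝ), |φ.eval x| := by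
    rw [← intervalIntegral.integral_const_mul, ← intervalIntegral.integral_sub
      (hcf.intervalIntegrable _ _) (Continuous.intervalIntegrable (u := fun x : ℝ => h * |φ.eval x|) (continuous_const.mul hcφ) _ _)]
    apply intervalIntegral.integral_congr
    intro x hx
    rw [Set.uIcc_of_le (by linarith : β ≤ (1:ℝ))] at hx
    exact key x (Or.inr hx.1)
  -- positivity of ∫ |φ| over [-1, α]
  have hφne : φ ≠ 0 := hφmon.ne_zero
  have hroots : Set.Finite {x : ℝ | φ.IsRoot x} := finite_setOf_isRoot hφne
  have hinf : (Set.Ioo (-1:ℝ) α).Infinite := Set.Ioo_infinite hα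
  obtain ⟨t, ht⟩ := (hinf.diff hroots).nonempty
  have hPa : 0 < ∫ x in (-1:ℝ)..α, |φ.eval x| := by
    apply intervalIntegral.integral_pos hα (hcφ.continuousOn)
      (fun x _ => abs_nonneg _)
    refine ⟨t, ⟨ht.1.1.le, ht.1.2.le⟩, ?_⟩
    exact abs_pos.mpr ht.2
  have hPb : 0 ≤ ∫ x in β..(1:ℝ), |φ.eval x| :=
    intervalIntegral.integral_nonneg (by linarith) (fun x _ => abs_nonneg _)
  have := hmin g hgmon hgdeg
  rw [hint1, hint2] at this
  nlinarith [mul_pos hhpos hPa, mul_nonneg hhpos.le hPb]
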